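/- For the maximizer (s₁,s₂) of the Legendre transform Ψ_p*(τt, τ^p), the first order conditions imply the identity τ^p p s₂ + τ t s₁ = τ^p - 1. -/

import Mathlib

open Real MeasureTheory

/-- The generalized `p`-th Gaussian density. -/
noncomputable def fp (p : ℝ) (y : ℝ) : ℝ :=
  Real.exp (-|y| ^ p / p) / (2 * p ^ (1/p) * Real.Gamma (1 + 1/p))

/-- The standard Gaussian density. -/
noncomputable def gauss (u : ℝ) : ℝ := Real.exp (-u ^ 2 / 2) / Real.sqrt (2 * Real.pi)


lemma hZpos {p : ℝ} (hp : 1 < p) : 0 < 2 * p ^ (1/p) * Real.Gamma (1 + 1/p) := by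
  have h1 : (0:ℝ) < p ^ (1/p) := rpow_pos_of_pos (by linarith) _
  have h2 : 0 < Real.Gamma (1 + 1/p) := Real.Gamma_pos_of_pos (by positivity)
  positivity

lemma fp_pos {p : ℝ} (hp : 1 < p) (y : ℝ) : 0 < fp p y :=
  div_pos (exp_pos _) (hZpos hp)

lemma kappa_pos {p : ℝ} (hp : 1 < p) : 0 < (1 - (1/2:ℝ) ^ p)/p := by
  have h1 : (1/2:ℝ) ^ p < 1 := rpow_lt_one (by norm_num) (by norm_num) (by linarith)
  have hp0 : (0:ℝ) < p := by linarith
  have : 0 < 1 - (1/2:ℝ) ^ p := by linarith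
  positivity

-- pointwise Young bound
lemma young_bd {p : ℝ} (hp : 1 < p) (x y : ℝ) :
    Real.exp (x * y) * fp p y ≤
      (Real.exp ((2*|x|) ^ p.conjExponent / p.conjExponent) / (2 * p ^ (1/p) * Real.Gamma (1 + 1/p)))
        * Real.exp (-((1 - (1/2:ℝ) ^ p)/p) * |y| ^ p) := by
  have hpq := Real.HolderConjugate.conjExponent hp
  have hp0 : (0:ℝ) < p := by linarith
  have hY : (|y|/2) * (2*|x|) ≤ (|y|/2) ^ p / p + (2*|x|) ^ p.conjExponent / p.conjExponent :=
    Real.young_inequality_of_nonneg (by positivity) (by positivity) hpq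
  have hhalf : (|y|/2) ^ p = |y| ^ p * (1/2:ℝ) ^ p := by
    rw [div_eq_mul_inv, Real.mul_rpow (abs_nonneg y) (by norm_num)]
    norm_num
  have hxy : x * y ≤ (|y|/2) * (2*|x|) := by
    have h := le_abs_self (x * y)
    rw [abs_mul] at h
    nlinarith [abs_nonneg x, abs_nonneg y]
  have harg : x * y + (-|y| ^ p / p) ≤
      (2*|x|) ^ p.conjExponent / p.conjExponent + (-((1 - (1/2:ℝ) ^ p)/p) * |y| ^ p) := by
    rw [hhalf] at hY
    have h := hxy.trans hY
    have e1 : |y| ^ p * (1 / 2:ℝ) ^ p / p = |y| ^ p * (1/2:ℝ) ^ p * p⁻¹ := by ring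
    have e2 : -|y| ^ p / p = -(|y| ^ p * p⁻¹) := by ring
    have e3 : -((1 - (1/2:ℝ) ^ p)/p) * |y| ^ p
        = |y| ^ p * (1/2:ℝ) ^ p * p⁻¹ - |y| ^ p * p⁻¹ := by ring
    rw [e2, e3]; rw [e1] at h; linarith
  calc Real.exp (x * y) * fp p y
      = Real.exp (x * y + (-|y| ^ p / p)) / (2 * p ^ (1/p) * Real.Gamma (1 + 1/p)) := by
        rw [Real.exp_add, fp]; ring
    _ ≤ Real.exp ((2*|x|) ^ p.conjExponent / p.conjExponent + (-((1 - (1/2:ℝ) ^ p)/p) * |y| ^ p))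
          / (2 * p ^ (1/p) * Real.Gamma (1 + 1/p)) := by
        gcongr
    _ = _ := by rw [Real.exp_add]; ring

lemma integrable_exp_neg_abs_rpow {q : ℝ} (hq : 1 < q) {b : ℝ} (hb : 0 < b) :
    Integrable fun y : ℝ => exp (-b * |y| ^ q) := by
  have h1 : IntegrableOn (fun y : ℝ => exp (-b * y ^ q)) (Set.Ioi 0) := by
    have := integrableOn_rpow_mul_exp_neg_mul_rpow (s := 0) (p := q) (by norm_num) (by linarith) hb
    simpa using this
  have habs : IntegrableOn (fun y : ℝ => exp (-b * |y| ^ q)) (Set.Ioi 0) := by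
    refine h1.congr_fun (fun x hx => ?_) measurableSet_Ioi
    rw [abs_of_pos hx]
  rw [← integrableOn_univ, ← Set.Iio_union_Ici (a := (0:ℝ)), integrableOn_union,
    integrableOn_Ici_iff_integrableOn_Ioi]
  refine ⟨?_, habs⟩
  rw [← (Measure.measurePreserving_neg (volume : Measure ℝ)).integrableOn_comp_preimage
      (Homeomorph.neg ℝ).measurableEmbedding]
  simp only [Function.comp_def, abs_neg, Set.neg_preimage, Set.neg_Iio, neg_neg, neg_zero]
  exact habs

lemma integral_ge_aux (g : ℝ → ℝ) (m : ℝ) (hg : Integrable g)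
    (hpos : ∀ y, 0 ≤ g y) (hlow : ∀ y ∈ Set.Ioc (0:ℝ) 1, m ≤ g y) :
    m ≤ ∫ y, g y := by
  have h1 : m * (volume (Set.Ioc (0:ℝ) 1)).toReal ≤ ∫ y in Set.Ioc (0:ℝ) 1, g y :=
    setIntegral_ge_of_const_le_real measurableSet_Ioc (by simp) hlow hg.integrableOn
  have h2 : ∫ y in Set.Ioc (0:ℝ) 1, g y ≤ ∫ y, g y :=
    setIntegral_le_integral hg (Filter.Eventually.of_forall hpos)
  have h3 : (volume (Set.Ioc (0:ℝ) 1)).toReal = 1 := by simp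
  rw [h3, mul_one] at h1
  linarith

lemma integral_pos_aux (g : ℝ → ℝ) (m : ℝ) (hm : 0 < m) (hg : Integrable g)
    (hpos : ∀ y, 0 ≤ g y) (hlow : ∀ y ∈ Set.Ioc (0:ℝ) 1, m ≤ g y) :
    0 < ∫ y, g y :=
  lt_of_lt_of_le hm (integral_ge_aux g m hg hpos hlow)

lemma fp_meas {p : ℝ} : Measurable (fp p) := by
  unfold fp
  fun_prop

lemma integrable_kernel {p : ℝ} (hp : 1 < p) (x : ℝ) :
    Integrable fun y : ℝ => Real.exp (x * y) * fp p y := by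
  have hκ := kappa_pos hp
  refine Integrable.mono'
    ((integrable_exp_neg_abs_rpow hp hκ).const_mul
      (Real.exp ((2*|x|) ^ p.conjExponent / p.conjExponent) / (2 * p ^ (1/p) * Real.Gamma (1 + 1/p))))
    ?_ ?_
  · exact ((measurable_const.mul measurable_id).exp.mul fp_meas).aestronglyMeasurable
  · refine Filter.Eventually.of_forall fun y => ?_
    rw [Real.norm_eq_abs, abs_of_nonneg (le_of_lt (mul_pos (exp_pos _) (fp_pos hp y)))]
    exact young_bd hp x y

lemma M_lower {p : ℝ} (hp : 1 < p) (x : ℝ) :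
    Real.exp (-|x|) * (Real.exp (-(1/p)) / (2 * p ^ (1/p) * Real.Gamma (1 + 1/p)))
      ≤ ∫ y : ℝ, Real.exp (x * y) * fp p y := by
  have hp0 : (0:ℝ) < p := by linarith
  refine integral_ge_aux _ _ (integrable_kernel hp x)
    (fun y => le_of_lt (mul_pos (exp_pos _) (fp_pos hp y))) ?_
  rintro y ⟨hy0, hy1⟩
  have h1 : Real.exp (-|x|) ≤ Real.exp (x * y) := by
    apply exp_le_exp.mpr
    have : |x * y| ≤ |x| := by
      rw [abs_mul]
      calc |x| * |y| ≤ |x| * 1 := by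
            apply mul_le_mul_of_nonneg_left _ (abs_nonneg x)
            rw [abs_of_pos hy0]; exact hy1
        _ = |x| := mul_one _
    linarith [neg_abs_le (x * y), neg_le_neg this]
  have h2 : Real.exp (-(1/p)) / (2 * p ^ (1/p) * Real.Gamma (1 + 1/p)) ≤ fp p y := by
    unfold fp
    have hyp : |y| ^ p ≤ 1 := by
      apply Real.rpow_le_one (abs_nonneg y) _ hp0.le
      rw [abs_of_pos hy0]; exact hy1
    rw [div_le_div_iff_of_pos_right (hZpos hp)]
    exact exp_le_exp.mpr (by rw [neg_div]; apply neg_le_neg; rw [div_le_div_iff_of_pos_right hp0]; exact hyp)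
  exact mul_le_mul h1 h2 (by positivity) (exp_pos _).le


lemma M_pos {p : ℝ} (hp : 1 < p) (x : ℝ) :
    0 < ∫ y : ℝ, Real.exp (x * y) * fp p y :=
  lt_of_lt_of_le (by have := hZpos hp; positivity) (M_lower hp x)

lemma logM_bound {p : ℝ} (hp : 1 < p) : ∃ D₁ D₂ : ℝ, 0 ≤ D₂ ∧
    ∀ x : ℝ, |Real.log (∫ y : ℝ, Real.exp (x * y) * fp p y)| ≤ D₁ + D₂ * |x| ^ p.conjExponent := by
  have hpq := Real.HolderConjugate.conjExponent hp
  have hq : 1 < p.conjExponent := hpq.symm.lt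
  have hq0 : (0:ℝ) < p.conjExponent := by linarith
  have hp0 : (0:ℝ) < p := by linarith
  have hκ := kappa_pos hp
  set q := p.conjExponent with hqdef
  set Z := 2 * p ^ (1/p) * Real.Gamma (1 + 1/p) with hZdef
  have hZ : 0 < Z := hZpos hp
  set I := ∫ y : ℝ, Real.exp (-((1 - (1/2:ℝ) ^ p)/p) * |y| ^ p) with hIdef
  have hI : 0 < I := by
    refine integral_pos_aux _ (Real.exp (-((1 - (1/2:ℝ) ^ p)/p))) (exp_pos _)
      (integrable_exp_neg_abs_rpow hp hκ) (fun y => (exp_pos _).le) ?_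
    rintro y ⟨hy0, hy1⟩
    apply exp_le_exp.mpr
    have hyp : |y| ^ p ≤ 1 := by
      apply Real.rpow_le_one (abs_nonneg y) _ hp0.le
      rw [abs_of_pos hy0]; exact hy1
    nlinarith [hκ]
  refine ⟨|Real.log I - Real.log Z| + |(1:ℝ)/p + Real.log Z| + 1, (2:ℝ) ^ q / q + 1, by positivity, fun x => ?_⟩
  have hupper : Real.log (∫ y : ℝ, Real.exp (x * y) * fp p y)
      ≤ (2:ℝ) ^ q / q * |x| ^ q + (Real.log I - Real.log Z) := by
    have hMle : (∫ y : ℝ, Real.exp (x * y) * fp p y)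
        ≤ (Real.exp ((2*|x|) ^ q / q) / Z) * I := by
      have h := integral_mono (integrable_kernel hp x)
        ((integrable_exp_neg_abs_rpow hp hκ).const_mul (Real.exp ((2*|x|) ^ q / q) / Z))
        (young_bd hp x)
      rwa [integral_const_mul] at h
    calc Real.log (∫ y : ℝ, Real.exp (x * y) * fp p y)
        ≤ Real.log ((Real.exp ((2*|x|) ^ q / q) / Z) * I) := Real.log_le_log (M_pos hp x) hMle
      _ = (2*|x|) ^ q / q - Real.log Z + Real.log I := by
          rw [Real.log_mul (by positivity) hI.ne', Real.log_div (exp_pos _).ne' hZ.ne',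
            Real.log_exp]
      _ = (2:ℝ) ^ q / q * |x| ^ q + (Real.log I - Real.log Z) := by
          rw [Real.mul_rpow (by norm_num) (abs_nonneg x)]; ring
  have hlower : -(|x| + 1/p + Real.log Z) ≤ Real.log (∫ y : ℝ, Real.exp (x * y) * fp p y) := by
    calc -(|x| + 1/p + Real.log Z)
        = Real.log (Real.exp (-|x|) * (Real.exp (-(1/p)) / Z)) := by
          rw [Real.log_mul (exp_pos _).ne' (by positivity), Real.log_div (exp_pos _).ne' hZ.ne',
            Real.log_exp, Real.log_exp]; ring
      _ ≤ _ := Real.log_le_log (by positivity) (M_lower hp x)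
  have habs1 : |x| ≤ 1 + |x| ^ q := by
    rcases le_or_gt (|x|) 1 with h | h
    · have : (0:ℝ) ≤ |x| ^ q := Real.rpow_nonneg (abs_nonneg x) q
      linarith
    · have : |x| ^ (1:ℝ) ≤ |x| ^ q := Real.rpow_le_rpow_of_exponent_le h.le hq.le
      rw [Real.rpow_one] at this
      have : (0:ℝ) ≤ 1 := zero_le_one
      linarith [Real.rpow_le_rpow_of_exponent_le h.le hq.le, Real.rpow_one |x| ▸ (rfl : |x| ^ (1:ℝ) = |x| ^ (1:ℝ))]
  have hxq0 : (0:ℝ) ≤ |x| ^ q := Real.rpow_nonneg (abs_nonneg x) q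
  have h2q0 : (0:ℝ) ≤ (2:ℝ) ^ q / q := by positivity
  rw [abs_le]
  constructor
  · have := le_abs_self ((1:ℝ)/p + Real.log Z)
    nlinarith [habs1, hxq0, h2q0, hlower, abs_nonneg (Real.log I - Real.log Z)]
  · have := le_abs_self (Real.log I - Real.log Z)
    nlinarith [hupper, hxq0, h2q0, abs_nonneg ((1:ℝ)/p + Real.log Z)]

lemma gauss_nonneg (u : ℝ) : 0 ≤ gauss u := by
  unfold gauss; positivity

lemma gauss_eq (u : ℝ) : gauss u = Real.exp (-(1/2:ℝ) * u ^ 2) * (Real.sqrt (2 * π))⁻¹ := by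
  unfold gauss
  rw [show -u ^ 2 / 2 = -(1/2:ℝ) * u ^ 2 by ring, div_eq_mul_inv]

lemma gauss_int : Integrable gauss := by
  have h0 : Integrable fun u : ℝ => Real.exp (-(1/2:ℝ) * u ^ 2) * (Real.sqrt (2 * π))⁻¹ :=
    (integrable_exp_neg_mul_sq (by norm_num)).mul_const _
  exact h0.congr (Filter.Eventually.of_forall fun u => (gauss_eq u).symm)

lemma gauss_integral : ∫ u : ℝ, gauss u = 1 := by
  have h : ∫ u : ℝ, gauss u = (∫ u : ℝ, Real.exp (-(1/2:ℝ) * u ^ 2)) * (Real.sqrt (2 * π))⁻¹ := by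
    rw [← integral_mul_const]
    exact integral_congr_ae (Filter.Eventually.of_forall fun u => gauss_eq u)
  rw [h, integral_gaussian, show π / (1/2:ℝ) = 2 * π by ring]
  exact mul_inv_cancel₀ (Real.sqrt_ne_zero'.mpr (by positivity))

lemma gauss_meas : Measurable gauss := by
  unfold gauss; fun_prop

lemma M_meas {p : ℝ} : StronglyMeasurable (fun x : ℝ => ∫ y : ℝ, Real.exp (x * y) * fp p y) := by
  apply MeasureTheory.StronglyMeasurable.integral_prod_right'
    (f := fun z : ℝ × ℝ => Real.exp (z.1 * z.2) * fp p z.2)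
  exact ((measurable_fst.mul measurable_snd).exp.mul (fp_meas.comp measurable_snd)).stronglyMeasurable

theorem stmt11 (p t τ s₁ s₂ : ℝ) (hp : 1 < p) (hτ : 0 < τ) (hs₂ : s₂ < 1/p)
    (Ψ : ℝ × ℝ → ℝ)
    -- Ψ_p(s₁,s₂) = ∫ Λ_p(u s₁, s₂) γ₂(du) with
    -- Λ_p(t₁,t₂) = -(1/p) log(1-p t₂) + log M_{γ_p}(t₁/(1-p t₂)^{1/p})
    (hΨ : Ψ = fun s : ℝ × ℝ => ∫ u : ℝ,
      (-(1/p) * Real.log (1 - p * s.2)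
        + Real.log (∫ y : ℝ, Real.exp ((u * s.1 / (1 - p * s.2) ^ (1/p)) * y) * fp p y))
        * gauss u)
    (hdiff : DifferentiableAt ℝ Ψ (s₁, s₂))
    -- first order conditions
    (h1 : fderiv ℝ Ψ (s₁, s₂) (1, 0) = τ * t)
    (h2 : fderiv ℝ Ψ (s₁, s₂) (0, 1) = τ ^ p) :
    τ ^ p * p * s₂ + τ * t * s₁ = τ ^ p - 1 := by
  have hp0 : (0:ℝ) < p := by linarith
  have hpq := Real.HolderConjugate.conjExponent hp
  have hq : 1 < p.conjExponent := hpq.symm.lt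
  set q := p.conjExponent with hqdef
  have hA : 0 < 1 - p * s₂ := by
    have h := (lt_div_iff₀ hp0).mp hs₂
    nlinarith
  set A := 1 - p * s₂ with hAdef
  have hB : 0 < A ^ (1/p) := Real.rpow_pos_of_pos hA _
  set B := A ^ (1/p) with hBdef
  set f : ℝ → ℝ := fun u => (-(1/p) * Real.log A
      + Real.log (∫ y : ℝ, Real.exp ((u * s₁ / B) * y) * fp p y)) * gauss u with hfdef
  -- integrability of f
  obtain ⟨D₁, D₂, hD₂, hbd⟩ := logM_bound hp
  set n : ℕ := ⌈q⌉₊ with hndef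
  have hqn : q ≤ (2 * n : ℕ) := by
    calc q ≤ (n : ℝ) := Nat.le_ceil q
      _ ≤ ((2 * n : ℕ) : ℝ) := by push_cast; nlinarith [Nat.cast_nonneg (α := ℝ) n]
  have habs_pow : ∀ u : ℝ, |u| ^ q ≤ 1 + u ^ (2 * n) := by
    intro u
    have heven : (0:ℝ) ≤ u ^ (2 * n) := (even_two_mul n).pow_nonneg u
    rcases le_or_gt (|u|) 1 with h | h
    · have := Real.rpow_le_one (abs_nonneg u) h (by linarith : (0:ℝ) ≤ q)
      linarith
    · have h1 : |u| ^ q ≤ |u| ^ ((2 * n : ℕ) : ℝ) :=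
        Real.rpow_le_rpow_of_exponent_le h.le hqn
      rw [Real.rpow_natCast, pow_abs, abs_of_nonneg heven] at h1
      linarith
  have hpoly_int : Integrable fun u : ℝ => u ^ (2 * n) * gauss u := by
    have h0 : Integrable fun u : ℝ => u ^ (((2 * n : ℕ)) : ℝ) * Real.exp (-(1/2:ℝ) * u ^ 2) :=
      integrable_rpow_mul_exp_neg_mul_sq (by norm_num)
        (by push_cast; nlinarith [Nat.cast_nonneg (α := ℝ) n])
    refine ((h0.mul_const (Real.sqrt (2 * π))⁻¹).congr (Filter.Eventually.of_forall fun u => ?_))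
    simp only [Real.rpow_natCast, gauss_eq]; ring
  -- measurability of f
  have hf_meas : AEStronglyMeasurable f volume := by
    apply Measurable.aestronglyMeasurable
    apply Measurable.mul _ gauss_meas
    apply Measurable.add measurable_const
    exact Real.measurable_log.comp
      (M_meas.measurable.comp ((measurable_id.mul_const s₁).div_const B))
  -- norm bound for f
  have hRq : (0:ℝ) ≤ (|s₁| / B) ^ q := Real.rpow_nonneg (by positivity) q
  have hxq : ∀ u : ℝ, |u * s₁ / B| ^ q = |u| ^ q * (|s₁| / B) ^ q := by
    intro u
    rw [show |u * s₁ / B| = |u| * (|s₁| / B) by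
      rw [abs_div, abs_mul, abs_of_pos hB, mul_div_assoc],
      Real.mul_rpow (abs_nonneg u) (by positivity)]
  set E₂ := D₂ * (|s₁| / B) ^ q with hE₂
  set E₁ := |(-(1/p) * Real.log A)| + D₁ + E₂ with hE₁
  have hfb : ∀ u : ℝ, ‖f u‖ ≤ E₁ * gauss u + E₂ * (u ^ (2 * n) * gauss u) := by
    intro u
    have hS : |(-(1/p) * Real.log A
        + Real.log (∫ y : ℝ, Real.exp ((u * s₁ / B) * y) * fp p y))|
        ≤ E₁ + E₂ * u ^ (2 * n) := by
      refine (abs_add_le _ _).trans ?_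
      rw [hE₁]
      have h2 := hbd (u * s₁ / B)
      rw [hxq u] at h2
      have h4 : D₂ * (|u| ^ q * (|s₁| / B) ^ q) ≤ E₂ * (1 + u ^ (2 * n)) := by
        rw [hE₂]
        nlinarith [habs_pow u, mul_nonneg hD₂ hRq, Real.rpow_nonneg (abs_nonneg u) q]
      linarith [h2, h4]
    calc ‖f u‖ = |(-(1/p) * Real.log A
          + Real.log (∫ y : ℝ, Real.exp ((u * s₁ / B) * y) * fp p y))| * gauss u := by
          rw [hfdef, Real.norm_eq_abs, abs_mul, abs_of_nonneg (gauss_nonneg u)]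
      _ ≤ (E₁ + E₂ * u ^ (2 * n)) * gauss u :=
          mul_le_mul_of_nonneg_right hS (gauss_nonneg u)
      _ = E₁ * gauss u + E₂ * (u ^ (2 * n) * gauss u) := by ring
  have hf_int : Integrable f :=
    ((gauss_int.const_mul E₁).add (hpoly_int.const_mul E₂)).mono' hf_meas
      (Filter.Eventually.of_forall hfb)
  -- the curve identity
  have hcurve : ∀ ε : ℝ, Ψ (s₁ * Real.exp ε, (1 - A * Real.exp (p * ε)) / p)
      = (∫ u, f u) - ε := by
    intro ε
    rw [hΨ]
    show (∫ u : ℝ, (-(1/p) * Real.log (1 - p * ((1 - A * Real.exp (p * ε)) / p))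
        + Real.log (∫ y : ℝ, Real.exp ((u * (s₁ * Real.exp ε)
          / (1 - p * ((1 - A * Real.exp (p * ε)) / p)) ^ (1/p)) * y) * fp p y)) * gauss u)
      = (∫ u, f u) - ε
    have hpt2 : 1 - p * ((1 - A * Real.exp (p * ε)) / p) = A * Real.exp (p * ε) := by
      field_simp
      ring
    have hrpow : (A * Real.exp (p * ε)) ^ (1/p) = B * Real.exp ε := by
      rw [hBdef, Real.mul_rpow hA.le (exp_pos _).le]
      congr 1
      rw [Real.rpow_def_of_pos (exp_pos _), Real.log_exp]
      congr 1
      field_simp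
    have hlog : Real.log (A * Real.exp (p * ε)) = Real.log A + p * ε := by
      rw [Real.log_mul hA.ne' (exp_pos _).ne', Real.log_exp]
    have harg : ∀ u : ℝ, u * (s₁ * Real.exp ε) / (B * Real.exp ε) = u * s₁ / B := by
      intro u
      field_simp
    have hKε : -(1/p) * (Real.log A + p * ε) = -(1/p) * Real.log A - ε := by
      field_simp
      ring
    have hfun : (fun u : ℝ => (-(1/p) * Real.log (1 - p * ((1 - A * Real.exp (p * ε)) / p))
        + Real.log (∫ y : ℝ, Real.exp ((u * (s₁ * Real.exp ε)
          / (1 - p * ((1 - A * Real.exp (p * ε)) / p)) ^ (1/p)) * y) * fp p y)) * gauss u)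
        = fun u => f u - ε * gauss u := by
      funext u
      rw [hpt2, hrpow, hlog, harg u, hKε]
      simp only [hfdef]
      ring
    rw [hfun, integral_sub hf_int (gauss_int.const_mul ε), integral_const_mul,
      gauss_integral, mul_one]
  -- differentiate along the curve
  have hd1exp : HasDerivAt (fun ε : ℝ => s₁ * Real.exp ε) s₁ 0 := by
    simpa using (Real.hasDerivAt_exp 0).const_mul s₁
  have hdexp2 : HasDerivAt (fun ε : ℝ => Real.exp (p * ε)) p 0 := by
    simpa using ((hasDerivAt_id (0:ℝ)).const_mul p).exp
  have hd2 : HasDerivAt (fun ε : ℝ => (1 - A * Real.exp (p * ε)) / p) (-A) 0 := by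
    have h := ((hdexp2.const_mul A).const_sub 1).div_const p
    rw [show -A = -(A * p) / p by field_simp]
    exact h
  have hprod : HasDerivAt (fun ε : ℝ => (s₁ * Real.exp ε, (1 - A * Real.exp (p * ε)) / p))
      ((s₁ : ℝ), -A) 0 := hd1exp.prodMk hd2
  have h0 : ((s₁ * Real.exp 0 : ℝ), (1 - A * Real.exp (p * 0)) / p) = (s₁, s₂) := by
    rw [hAdef]
    simp [Real.exp_zero]
    field_simp
  have hΨfd : HasFDerivAt Ψ (fderiv ℝ Ψ (s₁, s₂)) (s₁ * Real.exp 0, (1 - A * Real.exp (p * 0)) / p) := by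
    rw [h0]; exact hdiff.hasFDerivAt
  have hchain := hΨfd.comp_hasDerivAt 0 hprod
  have hchain' : HasDerivAt (fun ε : ℝ => Ψ (s₁ * Real.exp ε, (1 - A * Real.exp (p * ε)) / p))
      (fderiv ℝ Ψ (s₁, s₂) ((s₁ : ℝ), -A)) 0 := by
    exact hchain
  have hconst : HasDerivAt (fun ε : ℝ => Ψ (s₁ * Real.exp ε, (1 - A * Real.exp (p * ε)) / p))
      (-1 : ℝ) 0 := by
    have heq : (fun ε : ℝ => Ψ (s₁ * Real.exp ε, (1 - A * Real.exp (p * ε)) / p))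
        = fun ε : ℝ => (∫ u, f u) - ε := funext hcurve
    rw [heq]
    simpa using (hasDerivAt_id (0:ℝ)).const_sub (∫ u, f u)
  have hkey : fderiv ℝ Ψ (s₁, s₂) ((s₁ : ℝ), -A) = -1 := hchain'.unique hconst
  have hv : ((s₁ : ℝ), -A) = s₁ • ((1:ℝ), (0:ℝ)) + (-A) • ((0:ℝ), (1:ℝ)) := by
    simp [Prod.ext_iff]
  rw [hv, map_add, (fderiv ℝ Ψ (s₁, s₂)).map_smul, (fderiv ℝ Ψ (s₁, s₂)).map_smul,
    h1, h2, smul_eq_mul, smul_eq_mul] at hkey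
  rw [hAdef] at hkey
  linear_combination hkey
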